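/- Let F be a field, G a finite abelian group, m ∈ ℕ, and ψ : MonoidAlgebra F G ≃ₐ[F] (Fin m → F) an F-algebra isomorphism. For each i : Fin m define χ i : G → F by χ i g = ψ (single g 1) i. Then m = Nat.card G, each χ i is multiplicative with χ i 1 = 1 and takes only nonzero values (so defines a character G →* Fˣ), the maps χ i are pairwise distinct, and every group homomorphism G →* Fˣ arises (after composing with the coercion Fˣ → F) as χ i for some i. -/

import Mathlib

lemma pi_algHom_eq_eval {F : Type*} [Field F] {m : ℕ} (φ : (Fin m → F) →ₐ[F] F) :
    ∃ i : Fin m, ∀ x : Fin m → F, φ x = x i := by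
  have hsum : (∑ i : Fin m, (Pi.single i (1 : F) : Fin m → F)) = (1 : Fin m → F) := by
    ext j
    simp [Finset.sum_apply, Pi.single_apply]
  have h1 : (∑ i : Fin m, φ (Pi.single i (1 : F))) = 1 := by
    rw [← map_sum, hsum, map_one]
  have : ∃ i : Fin m, φ (Pi.single i (1 : F)) ≠ 0 := by
    by_contra h
    push_neg at h
    simp [h] at h1
  obtain ⟨i, hi⟩ := this
  have hidem : (Pi.single i (1 : F) : Fin m → F) * Pi.single i 1 = Pi.single i 1 := by
    ext j; by_cases hj : j = i <;> simp [Pi.single_apply, hj]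
  have hone : φ (Pi.single i (1 : F)) = 1 := by
    have h2 := map_mul φ (Pi.single i (1 : F)) (Pi.single i 1)
    rw [hidem] at h2
    have := mul_left_cancel₀ hi (h2.symm.trans (mul_one _).symm)
    exact this
  refine ⟨i, fun x => ?_⟩
  have hx : x * (Pi.single i (1 : F) : Fin m → F) = x i • (Pi.single i (1 : F) : Fin m → F) := by
    ext j; by_cases hj : j = i <;> simp [Pi.single_apply, hj]
  calc φ x = φ x * φ (Pi.single i 1) := by rw [hone, mul_one]
    _ = φ (x * Pi.single i 1) := (map_mul φ _ _).symm
    _ = φ (x i • (Pi.single i (1 : F) : Fin m → F)) := by rw [hx]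
    _ = x i * φ (Pi.single i 1) := by rw [map_smul, smul_eq_mul]
    _ = x i := by rw [hone, mul_one]

/-- Every algebra isomorphism from the group algebra of a finite abelian group `G` onto
a product of copies of the field is given coordinatewise by characters of `G`: the
coordinate functions are pairwise distinct nowhere-zero multiplicative maps, there are
exactly `|G|` of them, and every character of `G` occurs among them. -/
theorem iso_to_product_is_given_by_characters
    {F G : Type*} [Field F] [CommGroup G] [Finite G] (m : ℕ)
    (ψ : MonoidAlgebra F G ≃ₐ[F] (Fin m → F)) :
    m = Nat.card G ∧
    (∀ i : Fin m, ψ (MonoidAlgebra.of F G 1) i = 1) ∧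
    (∀ (i : Fin m) (g h : G),
      ψ (MonoidAlgebra.of F G (g * h)) i =
        ψ (MonoidAlgebra.of F G g) i * ψ (MonoidAlgebra.of F G h) i) ∧
    (∀ (i : Fin m) (g : G), ψ (MonoidAlgebra.of F G g) i ≠ 0) ∧
    (∀ i j : Fin m,
      (∀ g : G, ψ (MonoidAlgebra.of F G g) i = ψ (MonoidAlgebra.of F G g) j) → i = j) ∧
    (∀ ρ : G →* Fˣ, ∃ i : Fin m, ∀ g : G,
      ((ρ g : Fˣ) : F) = ψ (MonoidAlgebra.of F G g) i) := by
  have := Fintype.ofFinite G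
  have hone : ∀ i : Fin m, ψ (MonoidAlgebra.of F G 1) i = 1 := by
    intro i
    rw [map_one (MonoidAlgebra.of F G), map_one ψ]
    rfl
  have hmul : ∀ (i : Fin m) (g h : G),
      ψ (MonoidAlgebra.of F G (g * h)) i =
        ψ (MonoidAlgebra.of F G g) i * ψ (MonoidAlgebra.of F G h) i := by
    intro i g h
    rw [map_mul (MonoidAlgebra.of F G), map_mul ψ]
    rfl
  have hne : ∀ (i : Fin m) (g : G), ψ (MonoidAlgebra.of F G g) i ≠ 0 := by
    intro i g
    intro h0
    have h1 := hmul i g g⁻¹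
    rw [mul_inv_cancel, hone i, h0, zero_mul] at h1
    exact one_ne_zero h1
  refine ⟨?_, hone, hmul, hne, ?_, ?_⟩
  · have e1 : MonoidAlgebra F G ≃ₗ[F] (G → F) :=
      (MonoidAlgebra.coeffLinearEquiv F).trans (Finsupp.linearEquivFunOnFinite F F G)
    calc m = Module.finrank F (Fin m → F) := (Module.finrank_fin_fun F).symm
      _ = Module.finrank F (MonoidAlgebra F G) := (ψ.toLinearEquiv.finrank_eq).symm
      _ = Module.finrank F (G → F) := e1.finrank_eq
      _ = Fintype.card G := Module.finrank_pi F
      _ = Nat.card G := (Nat.card_eq_fintype_card).symm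
  · intro i j h
    have hall : ∀ x : MonoidAlgebra F G, ψ x i = ψ x j := by
      have : ((LinearMap.proj i).comp ψ.toLinearEquiv.toLinearMap :
          MonoidAlgebra F G →ₗ[F] F) = (LinearMap.proj j).comp ψ.toLinearEquiv.toLinearMap := by
        refine MonoidAlgebra.lhom_ext' fun a => LinearMap.ext fun b => ?_
        have hb : (MonoidAlgebra.single a b : MonoidAlgebra F G)
            = b • MonoidAlgebra.of F G a := by
          exact (MonoidAlgebra.smul_of a b).symm
        simp only [LinearMap.comp_apply, LinearMap.proj_apply, MonoidAlgebra.lsingle_apply, hb, map_smul]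
        simp only [AlgEquiv.toLinearEquiv_apply, Pi.smul_apply, LinearEquiv.coe_coe]
        exact congrArg (b • ·) (h a)
      intro x
      exact DFunLike.congr_fun this x
    have := hall (ψ.symm (Pi.single i 1))
    rw [AlgEquiv.apply_symm_apply] at this
    by_contra hij
    simp [Pi.single_apply, hij] at this
  · intro ρ
    let χ : MonoidAlgebra F G →ₐ[F] F :=
      MonoidAlgebra.lift F F G ((Units.coeHom F).comp ρ)
    obtain ⟨i, hi⟩ := pi_algHom_eq_eval (χ.comp ψ.symm.toAlgHom)
    refine ⟨i, fun g => ?_⟩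
    have := hi (ψ (MonoidAlgebra.of F G g))
    simp only [AlgHom.comp_apply, AlgEquiv.toAlgHom_eq_coe, AlgHom.coe_coe,
      AlgEquiv.symm_apply_apply] at this
    rw [← this]
    simp [χ, MonoidAlgebra.lift_of]
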